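/- Let X be a square-integrable random vector with values in EuclideanSpace ℝ (Fin n), with mean vector μ = E[X] and covariance matrix C defined by C i j = E[(X i − μ i)·(X j − μ j)]. Then X − μ lies in the range of C (viewed as a submodule of EuclideanSpace ℝ (Fin n)) almost surely. -/

import Mathlib

open MeasureTheory
open scoped RealInnerProductSpace

private lemma integrable_mul_of_memL2 {Ω : Type*} [MeasurableSpace Ω] {P : Measure Ω}
    {f g : Ω → ℝ} (hf : MemLp f 2 P) (hg : MemLp g 2 P) :
    Integrable (fun ω => f ω * g ω) P := by
  have h := (((hf.add hg).integrable_sq.sub hf.integrable_sq).sub hg.integrable_sq).div_const 2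
  have heq : (fun ω => f ω * g ω) = fun ω => (((f ω + g ω) ^ 2 - f ω ^ 2) - g ω ^ 2) / 2 := by
    funext ω; ring
  rw [heq]; exact h

private lemma range_eq_ker_orthogonal {E : Type*} [NormedAddCommGroup E]
    [InnerProductSpace ℝ E] [FiniteDimensional ℝ E] (T : E →ₗ[ℝ] E)
    (hT : T.IsSymmetric) :
    LinearMap.range T = (LinearMap.ker T)ᗮ := by
  have hle : LinearMap.range T ≤ (LinearMap.ker T)ᗮ := by
    rintro x ⟨u, rfl⟩
    rw [Submodule.mem_orthogonal]
    intro v hv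
    rw [LinearMap.mem_ker] at hv
    rw [← hT v u, hv, inner_zero_left]
  have h1 := LinearMap.finrank_range_add_finrank_ker T
  have h2 := Submodule.finrank_add_finrank_orthogonal (K := LinearMap.ker T)
  exact Submodule.eq_of_le_of_finrank_eq hle (by omega)

theorem ae_mem_range_covariance
    {Ω : Type*} [MeasurableSpace Ω] {n : ℕ}
    (P : Measure Ω) [IsProbabilityMeasure P]
    (X : Ω → EuclideanSpace ℝ (Fin n)) (hXm : Measurable X)
    (hX2 : ∀ i, MemLp (fun ω => X ω i) 2 P)
    (μ : EuclideanSpace ℝ (Fin n)) (hμ : ∀ i, μ i = ∫ ω, X ω i ∂P)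
    (C : Matrix (Fin n) (Fin n) ℝ)
    (hC : ∀ i j, C i j = ∫ ω, (X ω i - μ i) * (X ω j - μ j) ∂P) :
    ∀ᵐ ω ∂P, X ω - μ ∈ LinearMap.range (Matrix.toEuclideanLin C) := by
  set T := Matrix.toEuclideanLin C with hTdef
  -- C is symmetric, hence T is symmetric
  have hCsymm : C.IsHermitian := by
    ext i j
    simp only [Matrix.conjTranspose_apply, star_trivial]
    rw [hC i j, hC j i]
    congr 1; funext ω; ring
  have hTsymm : T.IsSymmetric := Matrix.isHermitian_iff_isSymmetric.mp hCsymm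
  have hY2 : ∀ i, MemLp (fun ω => X ω i - μ i) 2 P :=
    fun i => (hX2 i).sub (memLp_const (μ i))
  have hint : ∀ i j, Integrable (fun ω => (X ω i - μ i) * (X ω j - μ j)) P :=
    fun i j => integrable_mul_of_memL2 (hY2 i) (hY2 j)
  -- key: for v in ker T, ⟪v, X ω - μ⟫ = 0 a.e.
  have key : ∀ v : EuclideanSpace ℝ (Fin n), T v = 0 →
      ∀ᵐ ω ∂P, ⟪v, X ω - μ⟫ = 0 := by
    intro v hv
    have hfun : ∀ ω, ⟪v, X ω - μ⟫ = ∑ i, v i * (X ω i - μ i) := by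
      intro ω
      rw [PiLp.inner_apply]
      congr 1
      funext i; simp only [WithLp.ofLp_sub, Pi.sub_apply, RCLike.inner_apply, conj_trivial]; ring
    have hsq : ∀ ω, (⟪v, X ω - μ⟫) ^ 2
        = ∑ i, ∑ j, v i * v j * ((X ω i - μ i) * (X ω j - μ j)) := by
      intro ω
      rw [hfun, sq, Finset.sum_mul_sum]
      congr 1; funext i; congr 1; funext j; ring
    have hinteg : Integrable (fun ω => (⟪v, X ω - μ⟫) ^ 2) P := by
      have : Integrable (fun ω => ∑ i : Fin n, ∑ j : Fin n,
          v i * v j * ((X ω i - μ i) * (X ω j - μ j))) P := by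
        apply integrable_finset_sum
        intro i _
        apply integrable_finset_sum
        intro j _
        exact (hint i j).const_mul _
      simpa only [← hsq] using this
    have hintval : ∫ ω, (⟪v, X ω - μ⟫) ^ 2 ∂P = 0 := by
      have heq : ∫ ω, (⟪v, X ω - μ⟫) ^ 2 ∂P
          = ∑ i, ∑ j, v i * v j * C i j := by
        simp_rw [hsq]
        rw [integral_finset_sum _ (fun i _ => integrable_finset_sum _
          (fun j _ => (hint i j).const_mul _))]
        congr 1; funext i
        rw [integral_finset_sum _ (fun j _ => (hint i j).const_mul _)]
        congr 1; funext j
        rw [integral_const_mul, hC i j]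
      rw [heq]
      have hTv : ⟪v, T v⟫ = ∑ i, ∑ j, v i * v j * C i j := by
        rw [PiLp.inner_apply]
        have : ∀ i, (T v) i = ∑ j, C i j * v j := by
          intro i
          rw [hTdef, Matrix.toEuclideanLin_apply]
          rfl
        simp only [RCLike.inner_apply, starRingEnd_apply, star_trivial]
        rw [Finset.sum_congr rfl (fun i _ => by rw [this i, Finset.sum_mul])]
        congr 1; funext i; congr 1; funext j; ring
      rw [← hTv, hv, inner_zero_right]
    have hzero : (fun ω => (⟪v, X ω - μ⟫) ^ 2) =ᵐ[P] 0 := by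
      rw [← integral_eq_zero_iff_of_nonneg (fun ω => sq_nonneg _) hinteg]
      exact hintval
    filter_upwards [hzero] with ω hω
    exact (pow_eq_zero_iff two_ne_zero).mp hω
  -- combine over a basis of the kernel
  set K := LinearMap.ker T with hKdef
  have : FiniteDimensional ℝ K := inferInstance
  let b := Module.finBasis ℝ K
  have hae : ∀ᵐ ω ∂P, ∀ i, ⟪((b i : K) : EuclideanSpace ℝ (Fin n)), X ω - μ⟫ = 0 := by
    rw [ae_all_iff]
    intro i
    exact key _ (b i).2
  filter_upwards [hae] with ω hω
  rw [range_eq_ker_orthogonal T hTsymm, ← hKdef, Submodule.mem_orthogonal]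
  intro u hu
  -- u ∈ K; show ⟪u, X ω - μ⟫ = 0 using the basis
  let φ : K →ₗ[ℝ] ℝ :=
    (innerSL ℝ (X ω - μ)).toLinearMap.comp K.subtype
  have hφ : φ = 0 := by
    apply b.ext
    intro i
    simp only [φ, LinearMap.comp_apply, Submodule.subtype_apply,
      ContinuousLinearMap.coe_coe, innerSL_apply_apply, LinearMap.zero_apply]
    rw [real_inner_comm]
    exact hω i
  have := LinearMap.congr_fun hφ ⟨u, hu⟩
  simp only [φ, LinearMap.comp_apply, Submodule.subtype_apply,
    ContinuousLinearMap.coe_coe, innerSL_apply_apply, LinearMap.zero_apply] at this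
  rw [real_inner_comm]
  exact this
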